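/- arXiv:1007.3315 — 4 statements merged into one kernel-verified Lean document; each statement's English description precedes it below -/
import Mathlib

section
/- Matrix inversion lemma application: for B of full row rank, G a compatible matrix, and λ > 0, one has B*(λ⁻¹ B G G* B* + B B*)⁻¹ B restricted along a channel vector g satisfies g* B* (λ⁻¹ B G G* B* + B B*)⁻¹ B g = y − (λ + y)⁻¹ · (g* B*(BB*)⁻¹ B G G* B*(BB*)⁻¹ B g) when G* B*(BB*)⁻¹ B G = y I and g is the first column of G, where y = g* B*(BB*)⁻¹ B g; in this case the expression simplifies to λ y/(λ + y). -/
open Matrix ComplexOrder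

/-- Matrix inversion lemma application: let `B` be `m × n` of full row rank,
`G` an `n × 2` matrix with first column `g`, and `λ > 0`.  Set
`y = gᴴ Bᴴ (B Bᴴ)⁻¹ B g`.  If `Gᴴ Bᴴ (B Bᴴ)⁻¹ B G = y · I₂`, then
`gᴴ Bᴴ (λ⁻¹ B G Gᴴ Bᴴ + B Bᴴ)⁻¹ B g = λ y / (λ + y)`. -/
theorem matrix_inversion_lemma_snr (m n : ℕ)
    (B : Matrix (Fin m) (Fin n) ℂ) (hB : B.rank = m)
    (G : Matrix (Fin n) (Fin 2) ℂ) (lam : ℝ) (hlam : 0 < lam)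
    (g : Fin n → ℂ) (hg : g = fun i => G i 0)
    (y : ℝ)
    (hy : (y : ℂ) = star (B.mulVec g) ⬝ᵥ (B * Bᴴ)⁻¹.mulVec (B.mulVec g))
    (hGy : Gᴴ * Bᴴ * (B * Bᴴ)⁻¹ * B * G = (y : ℂ) • (1 : Matrix (Fin 2) (Fin 2) ℂ)) :
    star (B.mulVec g) ⬝ᵥ
        (((lam : ℂ))⁻¹ • (B * G * Gᴴ * Bᴴ) + B * Bᴴ)⁻¹.mulVec (B.mulVec g) =
      ((lam * y / (lam + y) : ℝ) : ℂ) := by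
  set A : Matrix (Fin m) (Fin m) ℂ := B * Bᴴ with hA
  -- A is invertible
  have hArank : A.rank = m := by rw [hA, rank_self_mul_conjTranspose, hB]
  have hAunit : IsUnit A := by
    rw [← mulVec_surjective_iff_isUnit]
    have htop : LinearMap.range A.mulVecLin = ⊤ := by
      apply Submodule.eq_top_of_finrank_eq
      rw [← Matrix.rank, hArank, Module.finrank_fintype_fun_eq_card, Fintype.card_fin]
    intro v
    obtain ⟨w, hw⟩ := LinearMap.mem_range.mp (htop ▸ Submodule.mem_top (x := v) (R := ℂ))
    exact ⟨w, hw⟩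
  have hAdet : IsUnit A.det := (isUnit_iff_isUnit_det A).mp hAunit
  have hA1 : A * A⁻¹ = 1 := mul_nonsing_inv A hAdet
  have hAH : Aᴴ = A := by rw [hA, conjTranspose_mul, conjTranspose_conjTranspose]
  have hAiH : A⁻¹ᴴ = A⁻¹ := by rw [conjTranspose_nonsing_inv, hAH]
  -- y ≥ 0
  have hApsd : A.PosSemidef := posSemidef_self_mul_conjTranspose B
  have hy0 : 0 ≤ y := by
    have h := (hApsd.inv).dotProduct_mulVec_nonneg (B.mulVec g)
    rw [← hy] at h
    exact_mod_cast h
  have hlamy : (0:ℝ) < lam + y := by linarith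
  set P : Matrix (Fin m) (Fin 2) ℂ := B * G with hP
  have hPH : Pᴴ = Gᴴ * Bᴴ := by rw [hP, conjTranspose_mul]
  have hGy' : Pᴴ * A⁻¹ * P = (y : ℂ) • (1 : Matrix (Fin 2) (Fin 2) ℂ) := by
    rw [hPH, hP, ← Matrix.mul_assoc]
    exact hGy
  set l : ℂ := (lam : ℂ) with hl
  have hl0 : l ≠ 0 := by
    rw [hl]
    exact_mod_cast hlam.ne'
  set c : ℂ := (((lam : ℝ) + y : ℝ) : ℂ)⁻¹ with hc
  have hly0 : ((((lam : ℝ) + y : ℝ)) : ℂ) ≠ 0 := by exact_mod_cast hlamy.ne'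
  set X : Matrix (Fin m) (Fin m) ℂ := A⁻¹ - c • (A⁻¹ * P * Pᴴ * A⁻¹) with hX
  set M : Matrix (Fin m) (Fin m) ℂ := l⁻¹ • (P * Pᴴ) + A with hM
  have hcoef : l⁻¹ - l⁻¹ * c * (y:ℂ) - c = 0 := by
    rw [hc, hl]
    push_cast
    field_simp
    ring
  have hMX : M * X = 1 := by
    have h2 : P * Pᴴ * (A⁻¹ * P * Pᴴ * A⁻¹) = (y:ℂ) • (P * Pᴴ * A⁻¹) := by
      have : P * Pᴴ * (A⁻¹ * P * Pᴴ * A⁻¹) = P * (Pᴴ * A⁻¹ * P) * (Pᴴ * A⁻¹) := by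
        simp only [Matrix.mul_assoc]
      rw [this, hGy']
      simp only [Matrix.mul_smul, Matrix.smul_mul, Matrix.mul_one, Matrix.mul_assoc]
    have h3 : A * (A⁻¹ * P * Pᴴ * A⁻¹) = P * Pᴴ * A⁻¹ := by
      have : A * (A⁻¹ * P * Pᴴ * A⁻¹) = (A * A⁻¹) * (P * (Pᴴ * A⁻¹)) := by
        simp only [Matrix.mul_assoc]
      rw [this, hA1, one_mul]
      simp only [Matrix.mul_assoc]
    have expand : M * X = 1 + (l⁻¹ - l⁻¹ * c * (y:ℂ) - c) • (P * Pᴴ * A⁻¹) := by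
      rw [hM, hX, Matrix.add_mul, Matrix.mul_sub, Matrix.mul_sub, Matrix.smul_mul,
        Matrix.smul_mul, Matrix.mul_smul, Matrix.mul_smul, h2, h3, hA1]
      module
    rw [expand, hcoef, zero_smul, add_zero]
  have hMinv : M⁻¹ = X := inv_eq_right_inv hMX
  set u : Fin m → ℂ := B.mulVec g with hu
  set v : Fin 2 → ℂ := (Pᴴ * A⁻¹).mulVec u with hv
  have hvval : v = fun i => if i = 0 then (y:ℂ) else 0 := by
    funext i
    have h1 : v i = (Pᴴ * A⁻¹ * P) i 0 := by
      rw [hv, hu, mulVec_mulVec, hg, hP, ← Matrix.mul_assoc]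
      simp [Matrix.mulVec, dotProduct, Matrix.mul_apply]
    rw [h1, hGy']
    simp [Matrix.one_apply, Matrix.smul_apply]
  have hvv : star v ⬝ᵥ v = (y:ℂ) * (y:ℂ) := by
    rw [hvval]
    simp [dotProduct, Fin.sum_univ_succ, Complex.conj_ofReal]
  -- the second quadratic form
  have hsecond : star u ⬝ᵥ (A⁻¹ * P * Pᴴ * A⁻¹).mulVec u = (y:ℂ) * (y:ℂ) := by
    have hassoc : A⁻¹ * P * Pᴴ * A⁻¹ = (A⁻¹ * P) * (Pᴴ * A⁻¹) := by
      simp only [Matrix.mul_assoc]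
    have hH : (A⁻¹ * P)ᴴ = Pᴴ * A⁻¹ := by rw [conjTranspose_mul, hAiH]
    rw [hassoc, ← mulVec_mulVec, ← hv, dotProduct_mulVec, ← hvv]
    congr 1
    have := star_mulVec (A⁻¹ * P)ᴴ u
    rw [conjTranspose_conjTranspose] at this
    rw [← this, hH, ← hv]
  -- rewrite the goal
  have hgoalM : ((l)⁻¹ • (B * G * Gᴴ * Bᴴ) + A) = M := by
    rw [hM, hP, hPH, ← Matrix.mul_assoc]
  rw [hgoalM, hMinv, hX, Matrix.sub_mulVec, dotProduct_sub, Matrix.smul_mulVec,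
    dotProduct_smul, hsecond, ← hy]
  rw [hc]
  push_cast
  have hly0' : (lam : ℂ) + (y : ℂ) ≠ 0 := by exact_mod_cast hlamy.ne'
  field_simp
  linear_combination (-(y:ℂ)^2) * mul_inv_cancel₀ hly0'
end

section
/- If X and Y are independent nonnegative random variables with P(X < ε) = Θ(ε^{d₁}) and P(Y < ε) = Θ(ε^{d₂}) as ε → 0⁺, then the scaled harmonic mean Z = XY/(X + cY) (for fixed c > 0) satisfies P(Z < ε) = Θ(ε^{min(d₁,d₂)}); i.e., Z has diversity gain min(d₁, d₂). -/
open MeasureTheory ProbabilityTheory Filter Set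

/-- `W` has outage probability `Θ(ε^d)` as `ε → 0⁺`. -/
def OutageTheta {Ω : Type*} [MeasureSpace Ω] (W : Ω → ℝ) (d : ℝ) : Prop :=
  ∃ C₁ C₂ : ℝ, 0 < C₁ ∧ 0 < C₂ ∧
    ∀ᶠ ε in nhdsWithin (0 : ℝ) (Ioi 0),
      C₁ * ε ^ d ≤ (ℙ {ω | W ω < ε}).toReal ∧
      (ℙ {ω | W ω < ε}).toReal ≤ C₂ * ε ^ d

lemma tendsto_const_mul_nhdsWithin_aux (k : ℝ) (hk : 0 < k) :
    Tendsto (fun ε : ℝ => k * ε) (nhdsWithin 0 (Ioi 0)) (nhdsWithin 0 (Ioi 0)) := by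
  apply tendsto_nhdsWithin_of_tendsto_nhds_of_eventually_within
  · have : Tendsto (fun ε : ℝ => k * ε) (nhds 0) (nhds (k * 0)) :=
      (continuous_const.mul continuous_id).tendsto 0
    simpa using this.mono_left nhdsWithin_le_nhds
  · filter_upwards [self_mem_nhdsWithin] with x hx
    exact mul_pos hk hx

lemma toReal_measure_mono {Ω : Type*} [MeasureSpace Ω]
    [IsProbabilityMeasure (ℙ : Measure Ω)] {A B : Set Ω} (h : A ⊆ B) :
    (ℙ A).toReal ≤ (ℙ B).toReal :=
  ENNReal.toReal_mono (measure_ne_top ℙ _) (measure_mono h)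

/-- If `X, Y` are independent nonnegative random variables with
`P(X < ε) = Θ(ε^{d₁})` and `P(Y < ε) = Θ(ε^{d₂})`, then the scaled harmonic
mean `Z = X Y / (X + c Y)` (with `Z = 0` when `X + c Y = 0`) satisfies
`P(Z < ε) = Θ(ε^{min(d₁, d₂)})`, i.e. `Z` has diversity gain `min(d₁, d₂)`. -/
theorem harmonic_mean_diversity
    {Ω : Type*} [MeasureSpace Ω] [IsProbabilityMeasure (ℙ : Measure Ω)]
    (X Y : Ω → ℝ) (hX : Measurable X) (hY : Measurable Y)
    (hXpos : ∀ ω, 0 ≤ X ω) (hYpos : ∀ ω, 0 ≤ Y ω)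
    (hindep : IndepFun X Y ℙ)
    (d₁ d₂ : ℝ) (hd₁ : 0 < d₁) (hd₂ : 0 < d₂)
    (hXd : OutageTheta X d₁) (hYd : OutageTheta Y d₂)
    (c : ℝ) (hc : 0 < c)
    (Z : Ω → ℝ)
    (hZ : ∀ ω, Z ω = if X ω + c * Y ω = 0 then 0
      else X ω * Y ω / (X ω + c * Y ω)) :
    OutageTheta Z (min d₁ d₂) := by
  obtain ⟨a₁, a₂, ha₁, ha₂, hXev⟩ := hXd
  obtain ⟨b₁, b₂, hb₁, hb₂, hYev⟩ := hYd
  have h1c : (0:ℝ) < 1 + c := by linarith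
  refine ⟨min (a₁ * c ^ d₁) b₁, a₂ * (1 + c) ^ d₁ + b₂ * (1 + c) ^ d₂, ?_, ?_, ?_⟩
  · exact lt_min (mul_pos ha₁ (Real.rpow_pos_of_pos hc _)) hb₁
  · have := Real.rpow_pos_of_pos h1c d₁
    have := Real.rpow_pos_of_pos h1c d₂
    positivity
  have hXc : ∀ᶠ ε in nhdsWithin (0:ℝ) (Ioi 0),
      a₁ * (c * ε) ^ d₁ ≤ (ℙ {ω | X ω < c * ε}).toReal ∧
      (ℙ {ω | X ω < c * ε}).toReal ≤ a₂ * (c * ε) ^ d₁ :=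
    (tendsto_const_mul_nhdsWithin_aux c hc).eventually hXev
  have hX1c : ∀ᶠ ε in nhdsWithin (0:ℝ) (Ioi 0),
      a₁ * ((1 + c) * ε) ^ d₁ ≤ (ℙ {ω | X ω < (1 + c) * ε}).toReal ∧
      (ℙ {ω | X ω < (1 + c) * ε}).toReal ≤ a₂ * ((1 + c) * ε) ^ d₁ :=
    (tendsto_const_mul_nhdsWithin_aux (1 + c) h1c).eventually hXev
  have hY1c : ∀ᶠ ε in nhdsWithin (0:ℝ) (Ioi 0),
      b₁ * ((1 + c) * ε) ^ d₂ ≤ (ℙ {ω | Y ω < (1 + c) * ε}).toReal ∧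
      (ℙ {ω | Y ω < (1 + c) * ε}).toReal ≤ b₂ * ((1 + c) * ε) ^ d₂ :=
    (tendsto_const_mul_nhdsWithin_aux (1 + c) h1c).eventually hYev
  have hsmall : Ioo (0:ℝ) 1 ∈ nhdsWithin (0:ℝ) (Ioi 0) :=
    Ioo_mem_nhdsGT_of_mem ⟨le_refl 0, one_pos⟩
  filter_upwards [hXc, hX1c, hY1c, hYev, mem_of_superset hsmall (fun x hx => hx)]
    with ε hXcε hX1cε hY1cε hYε hε
  obtain ⟨hε0, hε1⟩ := hε
  -- pointwise set inclusions
  have hsub1 : {ω | X ω < c * ε} ⊆ {ω | Z ω < ε} := by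
    intro ω hω
    simp only [mem_setOf_eq] at hω ⊢
    rw [hZ]
    split_ifs with hD
    · exact hε0
    · have hx := hXpos ω
      have hy := hYpos ω
      have hD' : 0 < X ω + c * Y ω := lt_of_le_of_ne (by positivity) (Ne.symm hD)
      have h1 : X ω * Y ω / (X ω + c * Y ω) ≤ X ω / c := by
        rw [div_le_div_iff₀ hD' hc]; nlinarith
      have h2 : X ω / c < ε := (div_lt_iff₀ hc).mpr (by linarith [mul_comm ε c])
      linarith
  have hsub2 : {ω | Y ω < ε} ⊆ {ω | Z ω < ε} := by
    intro ω hω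
    simp only [mem_setOf_eq] at hω ⊢
    rw [hZ]
    split_ifs with hD
    · exact hε0
    · have hx := hXpos ω
      have hy := hYpos ω
      have hD' : 0 < X ω + c * Y ω := lt_of_le_of_ne (by positivity) (Ne.symm hD)
      have h1 : X ω * Y ω / (X ω + c * Y ω) ≤ Y ω := by
        rw [div_le_iff₀ hD']
        nlinarith [mul_nonneg hc.le (mul_nonneg hy hy)]
      linarith
  have hsub3 : {ω | Z ω < ε} ⊆ {ω | X ω < (1 + c) * ε} ∪ {ω | Y ω < (1 + c) * ε} := by
    intro ω hω
    simp only [mem_setOf_eq] at hω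
    by_contra hcon
    simp only [mem_union, mem_setOf_eq, not_or, not_lt] at hcon
    obtain ⟨hx', hy'⟩ := hcon
    have hx := hXpos ω
    have hy := hYpos ω
    have hxp : 0 < X ω := lt_of_lt_of_le (by positivity) hx'
    have hyp : 0 < Y ω := lt_of_lt_of_le (by positivity) hy'
    have hD' : 0 < X ω + c * Y ω := by positivity
    rw [hZ, if_neg (ne_of_gt hD')] at hω
    have : ε * (X ω + c * Y ω) ≤ X ω * Y ω := by
      nlinarith [mul_nonneg (sub_nonneg.mpr hx') (sub_nonneg.mpr hy'),
        mul_le_mul_of_nonneg_left hx' (mul_nonneg hc.le hε0.le),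
        mul_le_mul_of_nonneg_left hy' hε0.le]
    have := (le_div_iff₀ hD').mpr (by linarith : ε * (X ω + c * Y ω) ≤ X ω * Y ω)
    linarith
  -- rpow facts
  have hεd₁ : ε ^ d₁ ≤ ε ^ min d₁ d₂ :=
    Real.rpow_le_rpow_of_exponent_ge hε0 hε1.le (min_le_left _ _)
  have hεd₂ : ε ^ d₂ ≤ ε ^ min d₁ d₂ :=
    Real.rpow_le_rpow_of_exponent_ge hε0 hε1.le (min_le_right _ _)
  have hεm : 0 < ε ^ min d₁ d₂ := Real.rpow_pos_of_pos hε0 _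
  constructor
  · -- lower bound
    rcases le_total d₁ d₂ with h | h
    · have hmin : min d₁ d₂ = d₁ := min_eq_left h
      have := hXcε.1
      rw [Real.mul_rpow hc.le hε0.le] at this
      calc min (a₁ * c ^ d₁) b₁ * ε ^ min d₁ d₂
          ≤ a₁ * c ^ d₁ * ε ^ d₁ := by
            rw [hmin]; exact mul_le_mul_of_nonneg_right (min_le_left _ _)
              (Real.rpow_pos_of_pos hε0 _).le
        _ ≤ (ℙ {ω | X ω < c * ε}).toReal := by linarith
        _ ≤ (ℙ {ω | Z ω < ε}).toReal := toReal_measure_mono hsub1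
    · have hmin : min d₁ d₂ = d₂ := min_eq_right h
      calc min (a₁ * c ^ d₁) b₁ * ε ^ min d₁ d₂
          ≤ b₁ * ε ^ d₂ := by
            rw [hmin]; exact mul_le_mul_of_nonneg_right (min_le_right _ _)
              (Real.rpow_pos_of_pos hε0 _).le
        _ ≤ (ℙ {ω | Y ω < ε}).toReal := hYε.1
        _ ≤ (ℙ {ω | Z ω < ε}).toReal := toReal_measure_mono hsub2
  · -- upper bound
    have hu : (ℙ {ω | Z ω < ε}).toReal
        ≤ (ℙ {ω | X ω < (1 + c) * ε}).toReal + (ℙ {ω | Y ω < (1 + c) * ε}).toReal := by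
      refine le_trans (toReal_measure_mono hsub3) ?_
      refine le_trans (ENNReal.toReal_mono ?_ (measure_union_le _ _)) ?_
      · exact ENNReal.add_ne_top.mpr ⟨measure_ne_top ℙ _, measure_ne_top ℙ _⟩
      · rw [ENNReal.toReal_add (measure_ne_top ℙ _) (measure_ne_top ℙ _)]
    have h2 := hX1cε.2
    have h3 := hY1cε.2
    rw [Real.mul_rpow h1c.le hε0.le] at h2 h3
    have e1 : a₂ * ((1 + c) ^ d₁ * ε ^ d₁) ≤ a₂ * (1 + c) ^ d₁ * ε ^ min d₁ d₂ := by
      rw [← mul_assoc]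
      exact mul_le_mul_of_nonneg_left hεd₁ (mul_nonneg ha₂.le (Real.rpow_pos_of_pos h1c d₁).le)
    have e2 : b₂ * ((1 + c) ^ d₂ * ε ^ d₂) ≤ b₂ * (1 + c) ^ d₂ * ε ^ min d₁ d₂ := by
      rw [← mul_assoc]
      exact mul_le_mul_of_nonneg_left hεd₂ (mul_nonneg hb₂.le (Real.rpow_pos_of_pos h1c d₂).le)
    calc (ℙ {ω | Z ω < ε}).toReal
        ≤ (ℙ {ω | X ω < (1 + c) * ε}).toReal + (ℙ {ω | Y ω < (1 + c) * ε}).toReal := hu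
      _ ≤ a₂ * (1 + c) ^ d₁ * ε ^ min d₁ d₂ + b₂ * (1 + c) ^ d₂ * ε ^ min d₁ d₂ := by
          have := le_trans h2 e1
          have := le_trans h3 e2
          linarith
      _ = (a₂ * (1 + c) ^ d₁ + b₂ * (1 + c) ^ d₂) * ε ^ min d₁ d₂ := by ring
end

section
/- If X, Y, Z are nonnegative random variables with Y, Z independent and each having diversity gain d, then Y + Z has diversity gain 2d; consequently, if X has diversity gain d₁ and is independent of (Y, Z), then XY/(X+cY) + XZ/(X+cZ) has diversity gain min(d₁, 2d) under the assumption that Y and Z have densities with P(Y < ε) = Θ(ε^d) and P(Z < ε) = Θ(ε^d). -/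
open MeasureTheory ProbabilityTheory Filter Set

/-- `W` has diversity gain `d`: `lim_{ε→0⁺} log P(W < ε) / log ε = d`. -/
def DiversityGain {Ω : Type*} [MeasureSpace Ω] (W : Ω → ℝ) (d : ℝ) : Prop :=
  Tendsto (fun ε : ℝ => Real.log ((ℙ {ω | W ω < ε}).toReal) / Real.log ε)
    (nhdsWithin 0 (Ioi 0)) (nhds d)

/- ======================= auxiliary lemmas ======================= -/

lemma aux_logC_div_log (C : ℝ) :
    Tendsto (fun ε : ℝ => Real.log C / Real.log ε) (nhdsWithin 0 (Ioi 0)) (nhds 0) := by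
  have h1 : Tendsto (fun ε : ℝ => -Real.log ε) (nhdsWithin 0 (Ioi 0)) atTop :=
    tendsto_neg_atBot_atTop.comp Real.tendsto_log_nhdsGT_zero
  have h3 : Tendsto (fun ε : ℝ => Real.log C * -(-Real.log ε)⁻¹) (nhdsWithin 0 (Ioi 0))
      (nhds (Real.log C * -0)) := (h1.inv_tendsto_atTop.neg.const_mul _)
  simp only [neg_zero, mul_zero] at h3
  refine h3.congr (fun ε => ?_)
  rw [neg_inv, neg_neg, div_eq_mul_inv]

lemma aux_tendsto_scale {k : ℝ} (hk : 0 < k) :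
    Tendsto (fun ε : ℝ => k * ε) (nhdsWithin 0 (Ioi 0)) (nhdsWithin 0 (Ioi 0)) := by
  rw [tendsto_nhdsWithin_iff]
  constructor
  · have h : Tendsto (fun ε : ℝ => k * ε) (nhds 0) (nhds (k * 0)) :=
      (continuous_const.mul continuous_id).tendsto 0
    simpa using h.mono_left nhdsWithin_le_nhds
  · filter_upwards [eventually_mem_nhdsWithin] with x (hx : (0:ℝ) < x)
    exact mul_pos hk hx

lemma aux_div_le_div_neg {a b c : ℝ} (h : a ≤ b) (hc : c < 0) : b / c ≤ a / c := by
  rw [div_eq_mul_inv, div_eq_mul_inv]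
  exact mul_le_mul_of_nonpos_right h (inv_nonpos.mpr hc.le)

lemma aux_max_div_neg {x y c : ℝ} (hc : c < 0) : max x y / c = min (x / c) (y / c) := by
  rcases le_total x y with h | h
  · rw [max_eq_right h, min_eq_right (aux_div_le_div_neg h hc)]
  · rw [max_eq_left h, min_eq_left (aux_div_le_div_neg h hc)]

/-- `log (K * ε ^ e) / log ε → e` as `ε → 0⁺`, for `K > 0`. -/
lemma aux_pow_ratio {K e : ℝ} (hK : 0 < K) :
    Tendsto (fun ε : ℝ => Real.log (K * ε ^ e) / Real.log ε) (nhdsWithin 0 (Ioi 0))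
      (nhds e) := by
  have h0 : Tendsto (fun ε : ℝ => Real.log K / Real.log ε + e) (nhdsWithin 0 (Ioi 0))
      (nhds (0 + e)) := (aux_logC_div_log K).add tendsto_const_nhds
  rw [zero_add] at h0
  refine h0.congr' ?_
  filter_upwards [eventually_mem_nhdsWithin,
    (eventually_lt_nhds one_pos).filter_mono nhdsWithin_le_nhds] with ε (hε : (0:ℝ) < ε) hε1
  have hl : Real.log ε < 0 := Real.log_neg hε hε1
  rw [Real.log_mul (ne_of_gt hK) (ne_of_gt (Real.rpow_pos_of_pos hε e)),
    Real.log_rpow hε, add_div, mul_div_assoc, div_self hl.ne, mul_one]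

/-- If `C₁ ε^d ≤ p ε ≤ C₂ ε^d` eventually near `0⁺`, then `log p / log ε → d`. -/
lemma aux_theta_to_gain {p : ℝ → ℝ} {d C₁ C₂ : ℝ} (hC₁ : 0 < C₁) (hC₂ : 0 < C₂)
    (h : ∀ᶠ ε in nhdsWithin (0:ℝ) (Ioi 0), C₁ * ε ^ d ≤ p ε ∧ p ε ≤ C₂ * ε ^ d) :
    Tendsto (fun ε : ℝ => Real.log (p ε) / Real.log ε) (nhdsWithin 0 (Ioi 0)) (nhds d) := by
  have hlo := (aux_pow_ratio (e := d) hC₂)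
  have hhi := (aux_pow_ratio (e := d) hC₁)
  refine tendsto_of_tendsto_of_tendsto_of_le_of_le' hlo hhi ?_ ?_
  · filter_upwards [h, eventually_mem_nhdsWithin,
      (eventually_lt_nhds one_pos).filter_mono nhdsWithin_le_nhds] with ε hp (hε : (0:ℝ) < ε) hε1
    have hl : Real.log ε < 0 := Real.log_neg hε hε1
    have hppos : 0 < p ε := lt_of_lt_of_le (mul_pos hC₁ (Real.rpow_pos_of_pos hε d)) hp.1
    exact aux_div_le_div_neg (Real.log_le_log hppos hp.2) hl
  · filter_upwards [h, eventually_mem_nhdsWithin,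
      (eventually_lt_nhds one_pos).filter_mono nhdsWithin_le_nhds] with ε hp (hε : (0:ℝ) < ε) hε1
    have hl : Real.log ε < 0 := Real.log_neg hε hε1
    exact aux_div_le_div_neg
      (Real.log_le_log (mul_pos hC₁ (Real.rpow_pos_of_pos hε d)) hp.1) hl

/-- `log (a (k ε)) / log ε → d₁` when `log (a ε) / log ε → d₁` and `k > 0`. -/
lemma aux_scaled_ratio {a : ℝ → ℝ} {d₁ k : ℝ} (hk : 0 < k)
    (hq : Tendsto (fun x : ℝ => Real.log (a x) / Real.log x) (nhdsWithin 0 (Ioi 0)) (nhds d₁)) :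
    Tendsto (fun ε : ℝ => Real.log (a (k * ε)) / Real.log ε) (nhdsWithin 0 (Ioi 0))
      (nhds d₁) := by
  have hsc := aux_tendsto_scale hk
  have h1 : Tendsto (fun ε : ℝ => Real.log (a (k * ε)) / Real.log (k * ε))
      (nhdsWithin 0 (Ioi 0)) (nhds d₁) := hq.comp hsc
  have h2 : Tendsto (fun ε : ℝ => Real.log (k * ε) / Real.log ε) (nhdsWithin 0 (Ioi 0))
      (nhds 1) := by
    have h0 : Tendsto (fun ε : ℝ => Real.log k / Real.log ε + 1) (nhdsWithin 0 (Ioi 0))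
        (nhds (0 + 1)) := (aux_logC_div_log k).add tendsto_const_nhds
    rw [zero_add] at h0
    refine h0.congr' ?_
    filter_upwards [eventually_mem_nhdsWithin,
      (eventually_lt_nhds one_pos).filter_mono nhdsWithin_le_nhds] with ε (hε : (0:ℝ) < ε) hε1
    have hl : Real.log ε < 0 := Real.log_neg hε hε1
    rw [Real.log_mul (ne_of_gt hk) (ne_of_gt hε), add_div, div_self hl.ne]
  have h3 := h1.mul h2
  rw [mul_one] at h3
  refine h3.congr' ?_
  filter_upwards [hsc.eventually eventually_mem_nhdsWithin,
    hsc.eventually ((eventually_lt_nhds one_pos).filter_mono nhdsWithin_le_nhds)]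
    with ε (hε : (0:ℝ) < k * ε) hε1
  have hl : Real.log (k * ε) < 0 := Real.log_neg hε hε1
  exact div_mul_div_cancel₀ hl.ne

/-- The key analytic sandwich lemma for the second part. -/
lemma aux_gain_min {p a : ℝ → ℝ} {d₁ d₂ c₁ c₂ K₁ K₂ : ℝ}
    (hd₁ : 0 < d₁) (hc₁ : 0 < c₁) (hc₂ : 0 < c₂) (hK₁ : 0 < K₁) (hK₂ : 0 < K₂)
    (ha0 : ∀ x, 0 ≤ a x)
    (hq : Tendsto (fun x : ℝ => Real.log (a x) / Real.log x) (nhdsWithin 0 (Ioi 0)) (nhds d₁))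
    (hlow : ∀ᶠ ε in nhdsWithin (0:ℝ) (Ioi 0), a (c₁ * ε) ≤ p ε ∧ K₁ * ε ^ d₂ ≤ p ε)
    (hup : ∀ᶠ ε in nhdsWithin (0:ℝ) (Ioi 0), p ε ≤ a (c₂ * ε) + K₂ * ε ^ d₂) :
    Tendsto (fun ε : ℝ => Real.log (p ε) / Real.log ε) (nhdsWithin 0 (Ioi 0))
      (nhds (min d₁ d₂)) := by
  have hmem : ∀ᶠ ε in nhdsWithin (0:ℝ) (Ioi 0), (0:ℝ) < ε := eventually_mem_nhdsWithin
  have hsmall : ∀ᶠ ε in nhdsWithin (0:ℝ) (Ioi 0), ε < 1 :=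
    (eventually_lt_nhds one_pos).filter_mono nhdsWithin_le_nhds
  -- eventually `a` is strictly between 0 and 1 (so its log is negative)
  have hapos : ∀ᶠ x in nhdsWithin (0:ℝ) (Ioi 0), 0 < a x ∧ Real.log (a x) < 0 := by
    have h1 : ∀ᶠ x in nhdsWithin (0:ℝ) (Ioi 0),
        d₁ / 2 < Real.log (a x) / Real.log x :=
      hq.eventually (eventually_gt_nhds (by linarith))
    filter_upwards [h1, hmem, hsmall] with x hx hx0 hx1
    have hlx : Real.log x < 0 := Real.log_neg hx0 hx1
    have hratio : 0 < Real.log (a x) / Real.log x := lt_trans (by linarith) hx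
    have hla : Real.log (a x) < 0 := by
      by_contra h
      push_neg at h
      have : Real.log (a x) / Real.log x ≤ 0 := div_nonpos_of_nonneg_of_nonpos h hlx.le
      linarith
    refine ⟨?_, hla⟩
    rcases (ha0 x).lt_or_eq with h | h
    · exact h
    · exfalso; rw [← h, Real.log_zero] at hla; exact lt_irrefl 0 hla
  have hsc₁ := aux_tendsto_scale hc₁
  have hsc₂ := aux_tendsto_scale hc₂
  -- limits of the bounding functions
  have hu₁ := aux_scaled_ratio hc₁ hq
  have hu₂ := aux_scaled_ratio hc₂ hq
  have hv₁ := aux_pow_ratio (e := d₂) hK₁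
  have hv₂ := aux_pow_ratio (e := d₂) hK₂
  have hupperlim : Tendsto (fun ε : ℝ =>
      min (Real.log (a (c₁ * ε)) / Real.log ε) (Real.log (K₁ * ε ^ d₂) / Real.log ε))
      (nhdsWithin 0 (Ioi 0)) (nhds (min d₁ d₂)) := hu₁.min hv₁
  have hlowerlim : Tendsto (fun ε : ℝ => Real.log 2 / Real.log ε +
      min (Real.log (a (c₂ * ε)) / Real.log ε) (Real.log (K₂ * ε ^ d₂) / Real.log ε))
      (nhdsWithin 0 (Ioi 0)) (nhds (0 + min d₁ d₂)) :=
    (aux_logC_div_log 2).add (hu₂.min hv₂)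
  rw [zero_add] at hlowerlim
  refine tendsto_of_tendsto_of_tendsto_of_le_of_le' hlowerlim hupperlim ?_ ?_
  · -- lower bound for the ratio
    filter_upwards [hup, hlow, hmem, hsmall, hsc₂.eventually hapos] with ε hU hL hε hε1 hA
    have hl : Real.log ε < 0 := Real.log_neg hε hε1
    have hB : 0 < K₂ * ε ^ d₂ := mul_pos hK₂ (Real.rpow_pos_of_pos hε d₂)
    have hp : 0 < p ε := lt_of_lt_of_le (mul_pos hK₁ (Real.rpow_pos_of_pos hε d₂)) hL.2
    set A := a (c₂ * ε) with hAdef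
    set B := K₂ * ε ^ d₂ with hBdef
    have hmax : p ε ≤ 2 * max A B := by
      have := hU
      have h1 : A ≤ max A B := le_max_left _ _
      have h2 : B ≤ max A B := le_max_right _ _
      linarith
    have hmaxpos : 0 < max A B := lt_of_lt_of_le hB (le_max_right _ _)
    have hlogp : Real.log (p ε) ≤ Real.log 2 + max (Real.log A) (Real.log B) := by
      have h1 : Real.log (p ε) ≤ Real.log (2 * max A B) := Real.log_le_log hp hmax
      rw [Real.log_mul (by norm_num) hmaxpos.ne'] at h1
      have h2 : Real.log (max A B) ≤ max (Real.log A) (Real.log B) := by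
        rcases le_total A B with h | h
        · rw [max_eq_right h]; exact le_max_right _ _
        · rw [max_eq_left h]; exact le_max_left _ _
      linarith
    calc Real.log 2 / Real.log ε + min (Real.log A / Real.log ε) (Real.log B / Real.log ε)
        = Real.log 2 / Real.log ε + max (Real.log A) (Real.log B) / Real.log ε := by
          rw [aux_max_div_neg hl]
      _ = (Real.log 2 + max (Real.log A) (Real.log B)) / Real.log ε := by ring
      _ ≤ Real.log (p ε) / Real.log ε := aux_div_le_div_neg hlogp hl
  · -- upper bound for the ratio
    filter_upwards [hlow, hmem, hsmall, hsc₁.eventually hapos] with ε hL hε hε1 hA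
    have hl : Real.log ε < 0 := Real.log_neg hε hε1
    have hp : 0 < p ε := lt_of_lt_of_le (mul_pos hK₁ (Real.rpow_pos_of_pos hε d₂)) hL.2
    refine le_min ?_ ?_
    · exact aux_div_le_div_neg (Real.log_le_log hA.1 hL.1) hl
    · exact aux_div_le_div_neg
        (Real.log_le_log (mul_pos hK₁ (Real.rpow_pos_of_pos hε d₂)) hL.2) hl

/-- If `Y, Z` are independent nonnegative random variables each with outage
probability `Θ(ε^d)`, then `Y + Z` has diversity gain `2d`; consequently, if
`X` has diversity gain `d₁` and is independent of `(Y, Z)`, then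
`X Y/(X + c Y) + X Z/(X + c Z)` has diversity gain `min(d₁, 2d)`. -/
theorem sum_and_harmonic_mean_diversity
    {Ω : Type*} [MeasureSpace Ω] [IsProbabilityMeasure (ℙ : Measure Ω)]
    (X Y Z : Ω → ℝ) (hXm : Measurable X) (hYm : Measurable Y) (hZm : Measurable Z)
    (hXpos : ∀ ω, 0 ≤ X ω) (hYpos : ∀ ω, 0 ≤ Y ω) (hZpos : ∀ ω, 0 ≤ Z ω)
    (hYZindep : IndepFun Y Z ℙ)
    (d d₁ : ℝ) (hd : 0 < d) (hd₁ : 0 < d₁)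
    (hYd : OutageTheta Y d) (hZd : OutageTheta Z d)
    (hXd : DiversityGain X d₁)
    (hXYZ : IndepFun X (fun ω => (Y ω, Z ω)) ℙ)
    (c : ℝ) (hc : 0 < c) :
    DiversityGain (fun ω => Y ω + Z ω) (2 * d) ∧
    DiversityGain
      (fun ω =>
        (if X ω + c * Y ω = 0 then 0 else X ω * Y ω / (X ω + c * Y ω)) +
        (if X ω + c * Z ω = 0 then 0 else X ω * Z ω / (X ω + c * Z ω)))
      (min d₁ (2 * d)) := by
  obtain ⟨CY₁, CY₂, hCY₁, hCY₂, hY⟩ := hYd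
  obtain ⟨CZ₁, CZ₂, hCZ₁, hCZ₂, hZ⟩ := hZd
  -- abbreviations
  set pS : ℝ → ℝ := fun ε => (ℙ {ω | Y ω + Z ω < ε}).toReal with hpSdef
  have hmem : ∀ᶠ ε in nhdsWithin (0:ℝ) (Ioi 0), (0:ℝ) < ε := eventually_mem_nhdsWithin
  -- product formula for the independent pair
  have hprod : ∀ s t : ℝ, (ℙ ({ω | Y ω < s} ∩ {ω | Z ω < t})).toReal
      = (ℙ {ω | Y ω < s}).toReal * (ℙ {ω | Z ω < t}).toReal := by
    intro s t
    have h := hYZindep.measure_inter_preimage_eq_mul (Iio s) (Iio t)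
      measurableSet_Iio measurableSet_Iio
    have hs : Y ⁻¹' Iio s = {ω | Y ω < s} := rfl
    have ht : Z ⁻¹' Iio t = {ω | Z ω < t} := rfl
    rw [hs, ht] at h
    rw [h, ENNReal.toReal_mul]
  -- Theta bounds for the sum Y+Z
  have hKsum₁ : (0:ℝ) < CY₁ * CZ₁ * (1/2 : ℝ) ^ (2*d) :=
    mul_pos (mul_pos hCY₁ hCZ₁) (Real.rpow_pos_of_pos (by norm_num) _)
  have hKsum₂ : (0:ℝ) < CY₂ * CZ₂ := mul_pos hCY₂ hCZ₂
  have hSumTheta : ∀ᶠ ε in nhdsWithin (0:ℝ) (Ioi 0),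
      (CY₁ * CZ₁ * (1/2 : ℝ) ^ (2*d)) * ε ^ (2*d) ≤ pS ε ∧
      pS ε ≤ (CY₂ * CZ₂) * ε ^ (2*d) := by
    have hhalf := aux_tendsto_scale (k := (1/2 : ℝ)) (by norm_num)
    filter_upwards [hY, hZ, hhalf.eventually hY, hhalf.eventually hZ, hmem]
      with ε hYε hZε hYh hZh hε
    have hεh : (0:ℝ) < 1/2 * ε := by linarith
    constructor
    · -- lower bound
      have hsub : {ω | Y ω < 1/2 * ε} ∩ {ω | Z ω < 1/2 * ε} ⊆ {ω | Y ω + Z ω < ε} := by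
        rintro ω ⟨h1, h2⟩
        simp only [mem_setOf_eq] at *
        linarith
      have hmono : (ℙ ({ω | Y ω < 1/2 * ε} ∩ {ω | Z ω < 1/2 * ε})).toReal ≤ pS ε :=
        ENNReal.toReal_mono (measure_ne_top _ _) (measure_mono hsub)
      rw [hprod] at hmono
      have hstep : (CY₁ * ((1/2) * ε) ^ d) * (CZ₁ * ((1/2) * ε) ^ d)
          ≤ (ℙ {ω | Y ω < 1/2 * ε}).toReal * (ℙ {ω | Z ω < 1/2 * ε}).toReal :=
        mul_le_mul hYh.1 hZh.1 (le_of_lt (mul_pos hCZ₁ (Real.rpow_pos_of_pos hεh d)))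
          ENNReal.toReal_nonneg
      have hcalc : (CY₁ * ((1/2) * ε) ^ d) * (CZ₁ * ((1/2) * ε) ^ d)
          = (CY₁ * CZ₁ * (1/2 : ℝ) ^ (2*d)) * ε ^ (2*d) := by
        rw [Real.mul_rpow (by norm_num) hε.le]
        rw [show (2*d) = d + d by ring, Real.rpow_add (by norm_num : (0:ℝ) < 1/2),
          Real.rpow_add hε]
        ring
      linarith [hcalc ▸ hstep, hmono]
    · -- upper bound
      have hsub : {ω | Y ω + Z ω < ε} ⊆ {ω | Y ω < ε} ∩ {ω | Z ω < ε} := by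
        intro ω h
        have h' : Y ω + Z ω < ε := h
        exact ⟨show Y ω < ε by linarith [hZpos ω], show Z ω < ε by linarith [hYpos ω]⟩
      have hmono : pS ε ≤ (ℙ ({ω | Y ω < ε} ∩ {ω | Z ω < ε})).toReal :=
        ENNReal.toReal_mono (measure_ne_top _ _) (measure_mono hsub)
      rw [hprod] at hmono
      have hstep : (ℙ {ω | Y ω < ε}).toReal * (ℙ {ω | Z ω < ε}).toReal
          ≤ (CY₂ * ε ^ d) * (CZ₂ * ε ^ d) :=
        mul_le_mul hYε.2 hZε.2 ENNReal.toReal_nonneg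
          (le_of_lt (mul_pos hCY₂ (Real.rpow_pos_of_pos hε d)))
      have hcalc : (CY₂ * ε ^ d) * (CZ₂ * ε ^ d) = (CY₂ * CZ₂) * ε ^ (2*d) := by
        rw [show (2*d) = d + d by ring, Real.rpow_add hε]; ring
      linarith [hcalc ▸ hstep, hmono]
  have hpart1 : DiversityGain (fun ω => Y ω + Z ω) (2 * d) :=
    aux_theta_to_gain hKsum₁ hKsum₂ hSumTheta
  refine ⟨hpart1, ?_⟩
  -- Part 2
  set W : Ω → ℝ := fun ω =>
      (if X ω + c * Y ω = 0 then 0 else X ω * Y ω / (X ω + c * Y ω)) +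
      (if X ω + c * Z ω = 0 then 0 else X ω * Z ω / (X ω + c * Z ω)) with hWdef
  -- pointwise bounds for the harmonic-mean terms
  have term_bound : ∀ (x y : ℝ), 0 ≤ x → 0 ≤ y →
      0 ≤ (if x + c * y = 0 then 0 else x * y / (x + c * y)) ∧
      (if x + c * y = 0 then 0 else x * y / (x + c * y)) ≤ x / c ∧
      (if x + c * y = 0 then 0 else x * y / (x + c * y)) ≤ y := by
    intro x y hx hy
    by_cases h : x + c * y = 0
    · simp only [h, if_pos rfl, if_true]
      exact ⟨le_refl 0, div_nonneg hx hc.le, hy⟩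
    · have hpos : 0 < x + c * y := lt_of_le_of_ne (by positivity) (Ne.symm h)
      simp only [if_neg h]
      refine ⟨div_nonneg (mul_nonneg hx hy) hpos.le, ?_, ?_⟩
      · rw [div_le_div_iff₀ hpos hc]
        nlinarith [mul_self_nonneg x]
      · rw [div_le_iff₀ hpos]
        nlinarith [mul_nonneg hc.le (mul_nonneg hy hy)]
  have term_lower : ∀ (x y ε : ℝ), 0 < ε → (1+c) * ε ≤ x → (1+c) * ε ≤ y →
      ε ≤ (if x + c * y = 0 then 0 else x * y / (x + c * y)) := by
    intro x y ε hε hx hy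
    have hxpos : 0 < x := lt_of_lt_of_le (by positivity) hx
    have hypos : 0 < y := lt_of_lt_of_le (by positivity) hy
    have hpos : 0 < x + c * y := by positivity
    rw [if_neg hpos.ne']
    rw [le_div_iff₀ hpos]
    nlinarith [mul_nonneg hxpos.le (sub_nonneg.mpr hy), mul_nonneg (mul_nonneg hc.le hypos.le) (sub_nonneg.mpr hx)]
  -- lower bound inclusions
  have hlow : ∀ᶠ ε in nhdsWithin (0:ℝ) (Ioi 0),
      (ℙ {ω | X ω < (c/2) * ε}).toReal ≤ (ℙ {ω | W ω < ε}).toReal ∧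
      (CY₁ * CZ₁ * (1/2 : ℝ) ^ (2*d)) * ε ^ (2*d) ≤ (ℙ {ω | W ω < ε}).toReal := by
    filter_upwards [hSumTheta, hmem] with ε hS hε
    constructor
    · refine ENNReal.toReal_mono (measure_ne_top _ _) (measure_mono ?_)
      intro ω hω
      simp only [mem_setOf_eq] at *
      obtain ⟨_, h1, _⟩ := term_bound (X ω) (Y ω) (hXpos ω) (hYpos ω)
      obtain ⟨_, h2, _⟩ := term_bound (X ω) (Z ω) (hXpos ω) (hZpos ω)
      have hXc : X ω / c < ε / 2 := by
        rw [div_lt_div_iff₀ hc (by norm_num : (0:ℝ) < 2)]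
        nlinarith
      calc W ω ≤ X ω / c + X ω / c := add_le_add h1 h2
        _ < ε / 2 + ε / 2 := by linarith
        _ = ε := by ring
    · refine le_trans hS.1 ?_
      refine ENNReal.toReal_mono (measure_ne_top _ _) (measure_mono ?_)
      intro ω hω
      simp only [mem_setOf_eq] at *
      obtain ⟨_, _, h1⟩ := term_bound (X ω) (Y ω) (hXpos ω) (hYpos ω)
      obtain ⟨_, _, h2⟩ := term_bound (X ω) (Z ω) (hXpos ω) (hZpos ω)
      calc W ω ≤ Y ω + Z ω := add_le_add h1 h2
        _ < ε := hω
  -- upper bound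
  have hK₂ : (0:ℝ) < CY₂ * CZ₂ * (1+c) ^ (2*d) :=
    mul_pos hKsum₂ (Real.rpow_pos_of_pos (by linarith) _)
  have hup : ∀ᶠ ε in nhdsWithin (0:ℝ) (Ioi 0),
      (ℙ {ω | W ω < ε}).toReal ≤ (ℙ {ω | X ω < (1+c) * ε}).toReal +
        (CY₂ * CZ₂ * (1+c) ^ (2*d)) * ε ^ (2*d) := by
    have hscc := aux_tendsto_scale (k := (1+c : ℝ)) (by linarith)
    filter_upwards [hscc.eventually hY, hscc.eventually hZ, hmem] with ε hYc hZc hε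
    have hsub : {ω | W ω < ε} ⊆ {ω | X ω < (1+c) * ε} ∪
        ({ω | Y ω < (1+c) * ε} ∩ {ω | Z ω < (1+c) * ε}) := by
      intro ω hω
      simp only [mem_setOf_eq, mem_union, mem_inter_iff] at *
      by_cases hX : X ω < (1+c) * ε
      · exact Or.inl hX
      · push_neg at hX
        right
        obtain ⟨h1n, _, _⟩ := term_bound (X ω) (Y ω) (hXpos ω) (hYpos ω)
        obtain ⟨h2n, _, _⟩ := term_bound (X ω) (Z ω) (hXpos ω) (hZpos ω)
        constructor
        · by_contra hY'
          push_neg at hY'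
          have := term_lower (X ω) (Y ω) ε hε hX hY'
          have hWge : ε ≤ W ω := by
            calc ε ≤ (if X ω + c * Y ω = 0 then 0 else X ω * Y ω / (X ω + c * Y ω)) := this
              _ ≤ W ω := by
                  have hW : W ω = (if X ω + c * Y ω = 0 then 0 else X ω * Y ω / (X ω + c * Y ω)) +
                    (if X ω + c * Z ω = 0 then 0 else X ω * Z ω / (X ω + c * Z ω)) := rfl
                  linarith
          linarith
        · by_contra hZ'
          push_neg at hZ'
          have := term_lower (X ω) (Z ω) ε hε hX hZ'
          have hWge : ε ≤ W ω := by
            calc ε ≤ (if X ω + c * Z ω = 0 then 0 else X ω * Z ω / (X ω + c * Z ω)) := this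
              _ ≤ W ω := by
                  have hW : W ω = (if X ω + c * Y ω = 0 then 0 else X ω * Y ω / (X ω + c * Y ω)) +
                    (if X ω + c * Z ω = 0 then 0 else X ω * Z ω / (X ω + c * Z ω)) := rfl
                  linarith
          linarith
    have h1 : (ℙ {ω | W ω < ε}).toReal ≤
        (ℙ ({ω | X ω < (1+c) * ε} ∪ ({ω | Y ω < (1+c) * ε} ∩ {ω | Z ω < (1+c) * ε}))).toReal :=
      ENNReal.toReal_mono (measure_ne_top _ _) (measure_mono hsub)
    have h2 : (ℙ ({ω | X ω < (1+c) * ε} ∪ ({ω | Y ω < (1+c) * ε} ∩ {ω | Z ω < (1+c) * ε}))).toReal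
        ≤ (ℙ {ω | X ω < (1+c) * ε}).toReal +
          (ℙ ({ω | Y ω < (1+c) * ε} ∩ {ω | Z ω < (1+c) * ε})).toReal := by
      rw [← ENNReal.toReal_add (measure_ne_top _ _) (measure_ne_top _ _)]
      exact ENNReal.toReal_mono (by finiteness) (measure_union_le _ _)
    rw [hprod] at h2
    have hεc : (0:ℝ) < (1+c) * ε := by positivity
    have h3 : (ℙ {ω | Y ω < (1+c) * ε}).toReal * (ℙ {ω | Z ω < (1+c) * ε}).toReal
        ≤ (CY₂ * ((1+c) * ε) ^ d) * (CZ₂ * ((1+c) * ε) ^ d) :=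
      mul_le_mul hYc.2 hZc.2 ENNReal.toReal_nonneg
        (le_of_lt (mul_pos hCY₂ (Real.rpow_pos_of_pos hεc d)))
    have hcalc : (CY₂ * ((1+c) * ε) ^ d) * (CZ₂ * ((1+c) * ε) ^ d)
        = (CY₂ * CZ₂ * (1+c) ^ (2*d)) * ε ^ (2*d) := by
      rw [Real.mul_rpow (by linarith : (0:ℝ) ≤ 1+c) hε.le]
      rw [show (2*d) = d + d by ring, Real.rpow_add (by linarith : (0:ℝ) < 1+c),
        Real.rpow_add hε]
      ring
    linarith [hcalc ▸ h3]
  exact aux_gain_min hd₁ (by positivity : (0:ℝ) < c/2) (by linarith : (0:ℝ) < 1+c)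
    hKsum₁ hK₂ (fun x => ENNReal.toReal_nonneg) hXd hlow hup
end

section
/- Suppose random variables satisfy γ ≤ 2·g·F where g is Gamma(2N,1)-distributed, F is, conditional on an independent auxiliary variable, exponential(1)-distributed, and g, F are independent. Then P(γ < ε) ≥ α·ε + o(ε) for some constant α > 0, so the diversity gain of γ is at most 1. (Uses E[1/g] = 1/(2N−1) for g ~ Gamma(2N,1).) -/
open MeasureTheory ProbabilityTheory Filter Set

/-- Suppose `g ~ Gamma(2N, 1)`, `F ~ Exp(1)`, `g` and `F` independent, and `γ`
is a nonnegative random variable with `γ ≤ 2 g F` almost surely.  Then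
`P(γ < ε) ≥ α ε + o(ε)` for some `α > 0` (indeed eventually `P(γ < ε) ≥ α ε`),
so the diversity gain of `γ` is at most `1`.
(Uses `E[1/g] = 1/(2N−1)` for `g ~ Gamma(2N,1)`.) -/
theorem diversity_upper_bound_one
    {Ω : Type*} [MeasureSpace Ω] [IsProbabilityMeasure (ℙ : Measure Ω)]
    (N : ℕ) (hN : 1 ≤ N)
    (g F γ : Ω → ℝ) (hgm : Measurable g) (hFm : Measurable F) (hγm : Measurable γ)
    (hg : Measure.map g ℙ = gammaMeasure (2 * N) 1)
    (hF : Measure.map F ℙ = expMeasure 1)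
    (hgF : IndepFun g F ℙ)
    (hγpos : ∀ ω, 0 ≤ γ ω)
    (hγle : ∀ᵐ ω ∂(ℙ : Measure Ω), γ ω ≤ 2 * g ω * F ω) :
    (∃ α : ℝ, 0 < α ∧ ∀ᶠ ε in nhdsWithin (0 : ℝ) (Ioi 0),
      α * ε ≤ (ℙ {ω | γ ω < ε}).toReal) ∧
    ∀ d : ℝ,
      Tendsto (fun ε : ℝ => Real.log ((ℙ {ω | γ ω < ε}).toReal) / Real.log ε)
        (nhdsWithin 0 (Ioi 0)) (nhds d) → d ≤ 1 := by
  have hN1 : (1:ℝ) ≤ (N:ℝ) := by exact_mod_cast hN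
  have h2N : (0:ℝ) < 2 * (N:ℕ) := by positivity
  -- `F` is a.e. nonnegative
  have hFnn : ∀ᵐ ω ∂(ℙ : Measure Ω), 0 ≤ F ω := by
    have h0 : (ℙ : Measure Ω) (F ⁻¹' Iio 0) = 0 := by
      rw [← Measure.map_apply hFm measurableSet_Iio, hF]
      show (volume.withDensity (gammaPDF 1 1)) (Iio 0) = 0
      rw [withDensity_apply _ measurableSet_Iio]
      exact lintegral_gammaPDF_of_nonpos le_rfl
    rw [ae_iff]
    convert h0 using 2; ext ω; simp [not_le]
  -- choose a threshold `M` for `g`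
  have hprob : IsProbabilityMeasure (gammaMeasure (2 * (N:ℕ)) 1) :=
    isProbabilityMeasure_gammaMeasure h2N one_pos
  have htend := tendsto_measure_Iic_atTop (μ := gammaMeasure (2 * (N:ℕ)) 1)
  have h12 : (1/2 : ENNReal) < (gammaMeasure (2 * (N:ℕ)) 1) univ := by
    rw [measure_univ]
    exact ENNReal.half_lt_self one_ne_zero ENNReal.one_ne_top
  obtain ⟨M, hMmeas, hM1⟩ :=
    ((htend.eventually (Ioi_mem_nhds h12)).and (eventually_ge_atTop (1:ℝ))).exists
  have hM0 : (0:ℝ) < M := lt_of_lt_of_le one_pos hM1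
  have hAeq : (ℙ : Measure Ω) (g ⁻¹' Iic M) = (gammaMeasure (2 * (N:ℕ)) 1) (Iic M) := by
    rw [← Measure.map_apply hgm measurableSet_Iic, hg]
  set c : ℝ := ((ℙ : Measure Ω) (g ⁻¹' Iic M)).toReal with hc_def
  have hc : 0 < c := by
    apply ENNReal.toReal_pos _ (measure_ne_top _ _)
    rw [hAeq]
    exact fun h => by simp [h] at hMmeas
  set α : ℝ := c / (8 * M) with hα_def
  have hα : 0 < α := by positivity
  have hexpP : IsProbabilityMeasure (expMeasure 1) := isProbabilityMeasure_expMeasure one_pos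
  have key : ∀ᶠ ε in nhdsWithin (0 : ℝ) (Ioi 0),
      α * ε ≤ ((ℙ : Measure Ω) {ω | γ ω < ε}).toReal := by
    filter_upwards [Ioo_mem_nhdsGT_of_mem (show (0:ℝ) ∈ Ico 0 (4*M) from
      ⟨le_rfl, by linarith⟩)] with ε hε
    have hε0 : 0 < ε := hε.1
    have hε4M : ε < 4 * M := hε.2
    set s : ℝ := ε / (4 * M) with hs_def
    have hs0 : 0 < s := by positivity
    have hs1 : s ≤ 1 := by
      rw [hs_def, div_le_one (by positivity)]; linarith
    -- the good event is contained in `{γ < ε}` a.e.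
    have hsub : (ℙ : Measure Ω) (g ⁻¹' Iic M ∩ F ⁻¹' Iic s) ≤ (ℙ : Measure Ω) {ω | γ ω < ε} := by
      apply measure_mono_ae
      filter_upwards [hγle, hFnn] with ω h1 h2
      intro hω
      obtain ⟨hgM, hFs⟩ := hω
      have hgM' : g ω ≤ M := hgM
      have hFs' : F ω ≤ s := hFs
      show γ ω < ε
      have step1 : 2 * g ω * F ω ≤ 2 * M * F ω := by nlinarith
      have step2 : 2 * M * F ω ≤ 2 * M * s := by nlinarith
      have step3 : 2 * M * s = ε / 2 := by
        rw [hs_def]; field_simp; ring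
      linarith
    -- independence
    have hindep := hgF.measure_inter_preimage_eq_mul (Iic M) (Iic s)
      measurableSet_Iic measurableSet_Iic
    -- CDF of exponential
    have hBeq : ((ℙ : Measure Ω) (F ⁻¹' Iic s)).toReal = 1 - Real.exp (-s) := by
      rw [← Measure.map_apply hFm measurableSet_Iic, hF]
      have := cdf_expMeasure_eq one_pos s
      rw [cdf_eq_real, measureReal_def] at this
      rw [this, if_pos hs0.le, one_mul]
    have hBlow : s / 2 ≤ ((ℙ : Measure Ω) (F ⁻¹' Iic s)).toReal := by
      rw [hBeq]
      have he : Real.exp (-s) ≤ 1/(1+s) := by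
        rw [Real.exp_neg, inv_eq_one_div]
        exact one_div_le_one_div_of_le (by linarith) (by linarith [Real.add_one_le_exp s])
      have h2 : 1/(1+s) ≤ 1 - s/2 := by
        rw [div_le_iff₀ (by linarith)]; nlinarith
      linarith
    -- put things together
    have hchain : (ℙ : Measure Ω) (g ⁻¹' Iic M) * (ℙ : Measure Ω) (F ⁻¹' Iic s)
        ≤ (ℙ : Measure Ω) {ω | γ ω < ε} := by
      rw [← hindep]; exact hsub
    have htoReal := ENNReal.toReal_mono (measure_ne_top _ _) hchain
    rw [ENNReal.toReal_mul] at htoReal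
    have : α * ε = c * (s/2) := by
      rw [hα_def, hs_def]; field_simp; ring
    rw [this]
    calc c * (s/2) ≤ c * ((ℙ : Measure Ω) (F ⁻¹' Iic s)).toReal :=
          mul_le_mul_of_nonneg_left hBlow hc.le
      _ ≤ ((ℙ : Measure Ω) {ω | γ ω < ε}).toReal := htoReal
  refine ⟨⟨α, hα, key⟩, ?_⟩
  intro d hd
  -- the comparison function tends to 1
  have h1 : Tendsto Real.log (nhdsWithin (0:ℝ) (Ioi 0)) atBot :=
    Real.tendsto_log_nhdsGT_zero
  have hneg : Tendsto (fun ε : ℝ => -Real.log ε) (nhdsWithin (0:ℝ) (Ioi 0)) atTop :=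
    tendsto_neg_atBot_atTop.comp h1
  have hinv : Tendsto (fun ε : ℝ => (-Real.log ε)⁻¹) (nhdsWithin (0:ℝ) (Ioi 0)) (nhds 0) :=
    hneg.inv_tendsto_atTop
  have h2 : Tendsto (fun ε : ℝ => Real.log α / Real.log ε)
      (nhdsWithin (0:ℝ) (Ioi 0)) (nhds 0) := by
    have := hinv.const_mul (-Real.log α)
    rw [mul_zero] at this
    apply this.congr
    intro ε
    rw [div_eq_mul_inv, inv_neg]
    ring
  have hcomp : Tendsto (fun ε : ℝ => Real.log α / Real.log ε + 1)
      (nhdsWithin (0:ℝ) (Ioi 0)) (nhds 1) := by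
    have := h2.add (tendsto_const_nhds (x := (1:ℝ)))
    simpa using this
  have hle : ∀ᶠ ε in nhdsWithin (0:ℝ) (Ioi 0),
      Real.log (((ℙ : Measure Ω) {ω | γ ω < ε}).toReal) / Real.log ε
        ≤ Real.log α / Real.log ε + 1 := by
    filter_upwards [key, Ioo_mem_nhdsGT_of_mem (show (0:ℝ) ∈ Ico 0 1 from
      ⟨le_rfl, one_pos⟩)] with ε h1' h2'
    have hε0 : 0 < ε := h2'.1
    have hε1 : ε < 1 := h2'.2
    have hlogε : Real.log ε < 0 := Real.log_neg hε0 hε1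
    have hP : 0 < α * ε := mul_pos hα hε0
    have hPle : Real.log (α * ε) ≤ Real.log (((ℙ : Measure Ω) {ω | γ ω < ε}).toReal) :=
      Real.log_le_log hP h1'
    rw [Real.log_mul (ne_of_gt hα) (ne_of_gt hε0)] at hPle
    have heq : Real.log α / Real.log ε + 1 = (Real.log α + Real.log ε) / Real.log ε := by
      rw [add_div, div_self (ne_of_lt hlogε)]
    rw [heq, div_le_div_right_of_neg hlogε]
    exact hPle
  exact le_of_tendsto_of_tendsto hd hcomp hle
end
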